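/- Let X be a real Banach space and let (A,B) be a pair of nonempty closed bounded subsets of X that is weak approximatively compact. Then A_0 ≠ ∅ and B_0 ≠ ∅. -/

import Mathlib

open Filter Topology

variable {X : Type*} [NormedAddCommGroup X] [NormedSpace ℝ X]

/-- The distance between two sets: `d(A,B) = inf {‖x−y‖ : x ∈ A, y ∈ B}`. -/
noncomputable def setD (A B : Set X) : ℝ :=
  sInf {r : ℝ | ∃ x ∈ A, ∃ y ∈ B, r = ‖x - y‖}

/-- The diameter-type quantity `δ(A,B) = sup {‖x−y‖ : x ∈ A, y ∈ B}`. -/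
noncomputable def setDelta (A B : Set X) : ℝ :=
  sSup {r : ℝ | ∃ x ∈ A, ∃ y ∈ B, r = ‖x - y‖}

/-- `d(z,B) = inf {‖z−y‖ : y ∈ B}`. -/
noncomputable def ptD (z : X) (B : Set X) : ℝ :=
  sInf {r : ℝ | ∃ y ∈ B, r = ‖z - y‖}

/-- `δ(z,B) = sup {‖z−y‖ : y ∈ B}`. -/
noncomputable def ptDelta (z : X) (B : Set X) : ℝ :=
  sSup {r : ℝ | ∃ y ∈ B, r = ‖z - y‖}

/-- A pair `(A,B)` is semisharp proximal. -/
def SemisharpProximal (A B : Set X) : Prop :=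
  (∀ x ∈ A, ∀ y ∈ B, ∀ z ∈ B, ‖x - y‖ = setD A B → ‖x - z‖ = setD A B → y = z) ∧
  (∀ y ∈ B, ∀ x ∈ A, ∀ z ∈ A, ‖x - y‖ = setD A B → ‖z - y‖ = setD A B → x = z)

/-- The pair `(A,B)` has property UC. -/
def PropertyUC (A B : Set X) : Prop :=
  ∀ x y z : ℕ → X, (∀ n, x n ∈ A) → (∀ n, y n ∈ A) → (∀ n, z n ∈ B) →
    Tendsto (fun n => ‖x n - z n‖) atTop (𝓝 (setD A B)) →
    Tendsto (fun n => ‖y n - z n‖) atTop (𝓝 (setD A B)) →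
    Tendsto (fun n => ‖x n - y n‖) atTop (𝓝 (0 : ℝ))

/-- Weak convergence of a sequence. -/
def WeakConv (u : ℕ → X) (x : X) : Prop :=
  ∀ f : X →L[ℝ] ℝ, Tendsto (fun n => f (u n)) atTop (𝓝 (f x))

/-- The Kadec-Klee property of a normed space. -/
def KadecKleeProp (X : Type*) [NormedAddCommGroup X] [NormedSpace ℝ X] : Prop :=
  ∀ (u : ℕ → X) (x : X), WeakConv u x →
    Tendsto (fun n => ‖u n‖) atTop (𝓝 ‖x‖) → Tendsto u atTop (𝓝 x)

/-- `A` is weak approximatively compact with respect to `B`. -/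
def WeakApproxCompactWrt (A B : Set X) : Prop :=
  ∀ u : ℕ → X, (∀ n, u n ∈ A) →
    Tendsto (fun n => ptD (u n) B) atTop (𝓝 (setD A B)) →
    ∃ a ∈ A, ∃ φ : ℕ → ℕ, StrictMono φ ∧ WeakConv (u ∘ φ) a

/-- `A₀`, the set of points of `A` that realize the distance `d(A,B)`. -/
def proxA (A B : Set X) : Set X := {x ∈ A | ∃ y ∈ B, ‖x - y‖ = setD A B}

/-- `B₀`, the set of points of `B` that realize the distance `d(A,B)`. -/
def proxB (A B : Set X) : Set X := {y ∈ B | ∃ x ∈ A, ‖x - y‖ = setD A B}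

/-- The pair `(A,B)` is proximal: `A = A₀` and `B = B₀`. -/
def ProximalPair (A B : Set X) : Prop := A = proxA A B ∧ B = proxB A B

/-- `r(H₁,H₂) = inf {δ(x,H₂) : x ∈ H₁}`. -/
noncomputable def rr (H1 H2 : Set X) : ℝ := sInf {t : ℝ | ∃ x ∈ H1, t = ptDelta x H2}

/-- `R(H₁,H₂) = max {r(H₁,H₂), r(H₂,H₁)}`. -/
noncomputable def RR (H1 H2 : Set X) : ℝ := max (rr H1 H2) (rr H2 H1)

/-- `(H₁,H₂) ∈ Υ(A,B)`: nonempty closed bounded convex proximal sub-pairs of `(A,B)` at the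
same distance, with at least one of the two sets containing more than one point. -/
def Upsilon (A B H1 H2 : Set X) : Prop :=
  H1 ⊆ A ∧ H2 ⊆ B ∧ H1.Nonempty ∧ H2.Nonempty ∧ IsClosed H1 ∧ IsClosed H2 ∧
    Bornology.IsBounded H1 ∧ Bornology.IsBounded H2 ∧ Convex ℝ H1 ∧ Convex ℝ H2 ∧
    ProximalPair H1 H2 ∧ (¬ H1.Subsingleton ∨ ¬ H2.Subsingleton) ∧
    setD H1 H2 = setD A B

/-- `N(A,B) = sup {R(H₁,H₂)/δ(H₁,H₂) : (H₁,H₂) ∈ Υ(A,B)}`. -/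
noncomputable def NN (A B : Set X) : ℝ :=
  sSup {t : ℝ | ∃ H1 H2 : Set X, Upsilon A B H1 H2 ∧ t = RR H1 H2 / setDelta H1 H2}

/-- `(C₁,C₂) ∈ Ῡ(A,B)`: as `Υ(A,B)` but without requiring proximality. -/
def UpsilonBar (A B C1 C2 : Set X) : Prop :=
  C1 ⊆ A ∧ C2 ⊆ B ∧ C1.Nonempty ∧ C2.Nonempty ∧ IsClosed C1 ∧ IsClosed C2 ∧
    Bornology.IsBounded C1 ∧ Bornology.IsBounded C2 ∧ Convex ℝ C1 ∧ Convex ℝ C2 ∧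
    (¬ C1.Subsingleton ∨ ¬ C2.Subsingleton) ∧ setD C1 C2 = setD A B

/-- `c₀ = sup {R(C₁,C₂)/δ(C₁,C₂) : (C₁,C₂) ∈ Ῡ(A,B)}`. -/
noncomputable def cZero (A B : Set X) : ℝ :=
  sSup {t : ℝ | ∃ C1 C2 : Set X, UpsilonBar A B C1 C2 ∧ t = RR C1 C2 / setDelta C1 C2}

/-- `T` is a cyclic relatively nonexpansive mapping on `A ∪ B`. -/
def CyclicRelNonexpansive (A B : Set X) (T : X → X) : Prop :=
  Set.MapsTo T A B ∧ Set.MapsTo T B A ∧ ∀ x ∈ A, ∀ y ∈ B, ‖T x - T y‖ ≤ ‖x - y‖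


lemma setD_bddBelow (A B : Set X) :
    BddBelow {r : ℝ | ∃ x ∈ A, ∃ y ∈ B, r = ‖x - y‖} :=
  ⟨0, by rintro r ⟨x, _, y, _, rfl⟩; positivity⟩

lemma setD_le {A B : Set X} {x y : X} (hx : x ∈ A) (hy : y ∈ B) :
    setD A B ≤ ‖x - y‖ :=
  csInf_le (setD_bddBelow A B) ⟨x, hx, y, hy, rfl⟩

lemma setD_nonneg {A B : Set X} (hA : A.Nonempty) (hB : B.Nonempty) :
    0 ≤ setD A B :=
  le_csInf (by obtain ⟨x, hx⟩ := hA; obtain ⟨y, hy⟩ := hB; exact ⟨_, x, hx, y, hy, rfl⟩)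
    (by rintro r ⟨x, _, y, _, rfl⟩; positivity)

lemma ptD_le {z : X} {B : Set X} {y : X} (hy : y ∈ B) : ptD z B ≤ ‖z - y‖ :=
  csInf_le ⟨0, by rintro r ⟨y, _, rfl⟩; positivity⟩ ⟨y, hy, rfl⟩

lemma setD_le_ptD {A B : Set X} {z : X} (hz : z ∈ A) (hB : B.Nonempty) :
    setD A B ≤ ptD z B := by
  apply le_csInf
  · obtain ⟨y, hy⟩ := hB; exact ⟨_, y, hy, rfl⟩
  · rintro r ⟨y, hy, rfl⟩; exact setD_le hz hy

lemma setD_symm (A B : Set X) : setD B A = setD A B := by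
  unfold setD
  congr 1
  ext r
  constructor
  · rintro ⟨y, hy, x, hx, rfl⟩; exact ⟨x, hx, y, hy, norm_sub_rev _ _⟩
  · rintro ⟨x, hx, y, hy, rfl⟩; exact ⟨y, hy, x, hx, norm_sub_rev _ _⟩

theorem stmt17 [CompleteSpace X]
    (A B : Set X) (hAne : A.Nonempty) (hBne : B.Nonempty)
    (hAcl : IsClosed A) (hBcl : IsClosed B)
    (hAbd : Bornology.IsBounded A) (hBbd : Bornology.IsBounded B)
    (hwacA : WeakApproxCompactWrt A B) (hwacB : WeakApproxCompactWrt B A) :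
    (proxA A B).Nonempty ∧ (proxB A B).Nonempty := by
  set d := setD A B with hd
  -- choose minimizing sequences
  have hseq : ∀ n : ℕ, ∃ x ∈ A, ∃ y ∈ B, ‖x - y‖ < d + 1 / (n + 1) := by
    intro n
    have hne : {r : ℝ | ∃ x ∈ A, ∃ y ∈ B, r = ‖x - y‖}.Nonempty := by
      obtain ⟨x, hx⟩ := hAne; obtain ⟨y, hy⟩ := hBne; exact ⟨_, x, hx, y, hy, rfl⟩
    have hlt : sInf {r : ℝ | ∃ x ∈ A, ∃ y ∈ B, r = ‖x - y‖} < d + 1 / (n + 1) := by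
      have : (0:ℝ) < 1 / (n + 1) := by positivity
      simpa [hd, setD] using lt_add_of_pos_right d this
    obtain ⟨r, ⟨x, hx, y, hy, rfl⟩, hr⟩ := exists_lt_of_csInf_lt hne hlt
    exact ⟨x, hx, y, hy, hr⟩
  choose x hxA y hyB hxy using hseq
  have hdsym : setD B A = d := setD_symm A B
  have htend : Tendsto (fun n : ℕ => d + 1 / (n + 1 : ℝ)) atTop (𝓝 d) := by
    have := tendsto_one_div_add_atTop_nhds_zero_nat (𝕜 := ℝ)
    simpa using (tendsto_const_nhds (x := d)).add this
  -- ptD (x n) B → d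
  have hx_min : Tendsto (fun n => ptD (x n) B) atTop (𝓝 d) := by
    refine tendsto_of_tendsto_of_tendsto_of_le_of_le tendsto_const_nhds htend
      (fun n => setD_le_ptD (hxA n) hBne) (fun n => le_of_lt ?_)
    exact lt_of_le_of_lt (ptD_le (hyB n)) (hxy n)
  have hy_min : Tendsto (fun n => ptD (y n) A) atTop (𝓝 (setD B A)) := by
    rw [hdsym]
    refine tendsto_of_tendsto_of_tendsto_of_le_of_le tendsto_const_nhds htend
      (fun n => hdsym ▸ setD_le_ptD (hyB n) hAne) (fun n => le_of_lt ?_)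
    refine lt_of_le_of_lt (ptD_le (hxA n)) ?_
    rw [norm_sub_rev]; exact hxy n
  obtain ⟨a, haA, φ, hφ, hwx⟩ := hwacA x hxA hx_min
  obtain ⟨b, hbB, ψ, hψ, hwy⟩ := hwacB (y ∘ φ) (fun n => hyB _)
    (hy_min.comp hφ.tendsto_atTop)
  -- the composed sequence
  set σ : ℕ → ℕ := φ ∘ ψ with hσ
  have hσmono : StrictMono σ := hφ.comp hψ
  have hwx' : WeakConv (x ∘ σ) a := fun f =>
    (hwx f).comp hψ.tendsto_atTop
  have hwy' : WeakConv (y ∘ σ) b := hwy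
  -- ‖a - b‖ ≤ d
  have hub : Tendsto (fun n : ℕ => d + 1 / (σ n + 1 : ℝ)) atTop (𝓝 d) :=
    htend.comp hσmono.tendsto_atTop
  have key : ‖a - b‖ ≤ d := by
    by_cases hab : a - b = 0
    · rw [hab, norm_zero]; exact setD_nonneg hAne hBne
    · obtain ⟨f, hf1, hfab⟩ := exists_dual_vector ℝ (a - b) (norm_ne_zero_iff.mpr hab)
      have h1 : Tendsto (fun n => f (x (σ n) - y (σ n))) atTop (𝓝 (f (a - b))) := by
        simpa [map_sub] using ((hwx' f).sub (hwy' f))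
      have h2 : ∀ n, f (x (σ n) - y (σ n)) ≤ d + 1 / (σ n + 1 : ℝ) := by
        intro n
        calc f (x (σ n) - y (σ n)) ≤ ‖f (x (σ n) - y (σ n))‖ := le_abs_self _
          _ ≤ ‖f‖ * ‖x (σ n) - y (σ n)‖ := f.le_opNorm _
          _ = ‖x (σ n) - y (σ n)‖ := by rw [hf1, one_mul]
          _ ≤ d + 1 / (σ n + 1 : ℝ) := (hxy (σ n)).le
      have := le_of_tendsto_of_tendsto' h1 hub h2
      simpa [hfab] using this
  have key2 : ‖a - b‖ = d := le_antisymm key (setD_le haA hbB)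
  exact ⟨⟨a, haA, b, hbB, key2⟩, ⟨b, hbB, a, haA, key2⟩⟩
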